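/- arXiv:0805.1738 — 4 statements merged into one kernel-verified Lean document; each statement's English description precedes it below -/
import Mathlib

section
/- Let S be an r-element subset of the group of (r+l)-th roots of unity and T its complement (an l-element set). Then for any Young diagram λ in an l × r rectangle, S_λ(u : u ∈ S) = (-1)^{|λ|} · S_{λ^T}(v : v ∈ T), where S_λ denotes the Schur polynomial associated to λ evaluated at the given multiset of roots of unity. -/
/-- The Schur polynomial `S_λ(x_1,...,x_r) = det(x_i^{λ_j + r - j}) / det(x_i^{r-j})`
evaluated at complex numbers (indices `0`-based via `Fin r`). -/
noncomputable def schurEval (r : ℕ) (lam : Fin r → ℕ) (x : Fin r → ℂ) : ℂ :=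
  (Matrix.det (fun i j : Fin r => x i ^ (lam j + (r - 1 - j.val)))) /
    (Matrix.det (fun i j : Fin r => x i ^ (r - 1 - j.val)))

/-- The transpose of a Young diagram in an `l × r` rectangle. -/
def ydT (r l : ℕ) (lam : Fin r → ℕ) : Fin l → ℕ :=
  fun j => (Finset.univ.filter (fun i : Fin r => j.val + 1 ≤ lam i)).card

namespace SchurRL

open Matrix Finset Equiv


open Matrix Finset Equiv

variable {r l : ℕ}

/-- exponents for the `u` block -/
def aexp (r : ℕ) (lam : Fin r → ℕ) (j : Fin r) : ℕ := lam j + (r - 1 - j.val)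

/-- exponents for the transposed diagram -/
def cexp (r l : ℕ) (lam : Fin r → ℕ) (k : Fin l) : ℕ := ydT r l lam k + (l - 1 - k.val)

/-- complementary exponents for the `v` block -/
def bexp (r l : ℕ) (lam : Fin r → ℕ) (k : Fin l) : ℕ := (r + l - 1) - cexp r l lam k

def expo (r l : ℕ) (lam : Fin r → ℕ) : Fin r ⊕ Fin l → ℕ :=
  Sum.elim (aexp r lam) (bexp r l lam)

lemma ydT_le (lam : Fin r → ℕ) (k : Fin l) : ydT r l lam k ≤ r := by
  apply le_trans (Finset.card_filter_le _ _)
  simp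

lemma key_ne (lam : Fin r → ℕ) (hmono : ∀ i j : Fin r, i ≤ j → lam j ≤ lam i)
    (j : Fin r) (k : Fin l) : lam j + ydT r l lam k ≠ j.val + k.val + 1 := by
  rcases le_or_gt (lam j) k.val with h | h
  · have hsub : Finset.univ.filter (fun i : Fin r => k.val + 1 ≤ lam i) ⊆
        Finset.Iio j := by
      intro i hi
      simp only [Finset.mem_filter] at hi
      have : ¬ (j ≤ i) := by
        intro hji
        exact absurd (hmono j i hji) (by omega)
      simpa [Finset.mem_Iio] using lt_of_not_ge this
    have := Finset.card_le_card hsub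
    rw [Fin.card_Iio] at this
    have : ydT r l lam k ≤ j.val := this
    omega
  · have hsub : Finset.Iic j ⊆
        Finset.univ.filter (fun i : Fin r => k.val + 1 ≤ lam i) := by
      intro i hi
      simp only [Finset.mem_Iic] at hi
      have := hmono i j hi
      simp only [Finset.mem_filter, Finset.mem_univ, true_and]
      omega
    have := Finset.card_le_card hsub
    rw [Fin.card_Iic] at this
    have : j.val + 1 ≤ ydT r l lam k := this
    omega

lemma expo_lt (hr : 0 < r) (lam : Fin r → ℕ) (hle : ∀ i, lam i ≤ l)
    (c : Fin r ⊕ Fin l) : expo r l lam c < r + l := by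
  cases c with
  | inl j => have := hle j; have := j.isLt; simp only [expo, Sum.elim_inl, aexp]; omega
  | inr k => simp only [expo, Sum.elim_inr, bexp]; omega

lemma cexp_le (lam : Fin r → ℕ) (k : Fin l) : cexp r l lam k ≤ r + l - 1 := by
  have h1 := ydT_le lam k
  have h2 := k.isLt
  simp only [cexp]; omega

lemma expo_inj (hr : 0 < r) (lam : Fin r → ℕ)
    (hmono : ∀ i j : Fin r, i ≤ j → lam j ≤ lam i) (hle : ∀ i, lam i ≤ l) :
    Function.Injective (expo r l lam) := by
  have hydanti : ∀ k k' : Fin l, k ≤ k' → ydT r l lam k' ≤ ydT r l lam k := by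
    intro k k' hkk'
    apply Finset.card_le_card
    intro i hi
    simp only [Finset.mem_filter, Finset.mem_univ, true_and] at hi ⊢
    have : k.val ≤ k'.val := hkk'
    omega
  intro c c' h
  cases c with
  | inl j => cases c' with
    | inl j' =>
      -- aexp strictly decreasing
      congr 1
      by_contra hne
      have hne' : j ≠ j' := fun e => hne (by rw [e])
      rcases lt_or_gt_of_ne hne' with hlt | hlt
      · have h1 := hmono j j' hlt.le
        have h2 : j.val < j'.val := hlt
        have h3 := j'.isLt
        simp only [expo, Sum.elim_inl, aexp] at h
        omega
      · have h1 := hmono j' j hlt.le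
        have h2 : j'.val < j.val := hlt
        have h3 := j.isLt
        simp only [expo, Sum.elim_inl, aexp] at h
        omega
    | inr k =>
      exfalso
      simp only [expo, Sum.elim_inl, Sum.elim_inr, aexp, bexp, cexp] at h
      have h1 := ydT_le lam k
      have h2 := k.isLt
      have h3 := j.isLt
      have h4 := key_ne lam hmono j k
      omega
  | inr k => cases c' with
    | inl j =>
      exfalso
      simp only [expo, Sum.elim_inl, Sum.elim_inr, aexp, bexp, cexp] at h
      have h1 := ydT_le lam k
      have h2 := k.isLt
      have h3 := j.isLt
      have h4 := key_ne lam hmono j k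
      omega
    | inr k' =>
      congr 1
      by_contra hne
      have hne' : k ≠ k' := fun e => hne (by rw [e])
      simp only [expo, Sum.elim_inr, bexp, cexp] at h
      have h1 := ydT_le lam k
      have h1' := ydT_le lam k'
      have h2 := k.isLt
      have h2' := k'.isLt
      rcases lt_or_gt_of_ne hne' with hlt | hlt
      · have := hydanti k k' hlt.le
        have hv : k.val < k'.val := hlt
        omega
      · have := hydanti k' k hlt.le
        have hv : k'.val < k.val := hlt
        omega



open Matrix Finset Equiv

/-- Block determinant identity from `M * Mi = 1`. -/
lemma det_block {m n : Type*} [Fintype m] [Fintype n] [DecidableEq m] [DecidableEq n]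
    (M Mi : Matrix (m ⊕ n) (m ⊕ n) ℂ) (h : M * Mi = 1) :
    (M.toBlocks₁₁).det = M.det * (Mi.toBlocks₂₂).det := by
  have hb : fromBlocks (M.toBlocks₁₁) (M.toBlocks₁₂) (M.toBlocks₂₁) (M.toBlocks₂₂) *
      fromBlocks (Mi.toBlocks₁₁) (Mi.toBlocks₁₂) (Mi.toBlocks₂₁) (Mi.toBlocks₂₂) =
      fromBlocks 1 0 0 1 := by
    rw [fromBlocks_toBlocks, fromBlocks_toBlocks, fromBlocks_one]
    exact h
  rw [fromBlocks_multiply] at hb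
  have h12 : M.toBlocks₁₁ * Mi.toBlocks₁₂ + M.toBlocks₁₂ * Mi.toBlocks₂₂ = 0 := by
    have := congrArg Matrix.toBlocks₁₂ hb
    rwa [Matrix.toBlocks_fromBlocks₁₂, Matrix.toBlocks_fromBlocks₁₂] at this
  have h22 : M.toBlocks₂₁ * Mi.toBlocks₁₂ + M.toBlocks₂₂ * Mi.toBlocks₂₂ = 1 := by
    have := congrArg Matrix.toBlocks₂₂ hb
    rwa [Matrix.toBlocks_fromBlocks₂₂, Matrix.toBlocks_fromBlocks₂₂] at this
  have h2 : M * fromBlocks 1 (Mi.toBlocks₁₂) 0 (Mi.toBlocks₂₂) =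
      fromBlocks (M.toBlocks₁₁) 0 (M.toBlocks₂₁) 1 := by
    conv_lhs => rw [← fromBlocks_toBlocks M]
    rw [fromBlocks_multiply]
    rw [h12, h22, Matrix.mul_one, Matrix.mul_one, Matrix.mul_zero, Matrix.mul_zero,
      add_zero, add_zero]
  have := congrArg Matrix.det h2
  rw [det_mul, det_fromBlocks_zero₂₁, det_fromBlocks_zero₁₂] at this
  simp only [Matrix.det_one, mul_one, one_mul] at this
  exact this.symm

lemma det_powcol_ne_zero {n : ℕ} (x : Fin n → ℂ) (hx : Function.Injective x) :
    Matrix.det (Matrix.of fun i j : Fin n => x i ^ (n - 1 - j.val)) ≠ 0 := by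
  have he : (Matrix.of fun i j : Fin n => x i ^ (n - 1 - j.val)) =
      (Matrix.vandermonde x).submatrix id ⇑(Fin.revPerm) := by
    ext i j
    have : (Fin.rev j).val = n - 1 - j.val := by
      have := j.isLt
      simp only [Fin.val_rev]
      omega
    simp only [Matrix.vandermonde, Matrix.submatrix_apply, id_eq, Matrix.of_apply,
      Fin.revPerm_apply, this]
  rw [he, Matrix.det_permute']
  apply mul_ne_zero
  · simp
  · exact Matrix.det_vandermonde_ne_zero_iff.mpr hx


lemma orth (hr : 0 < r) (lam : Fin r → ℕ)
    (hmono : ∀ i j : Fin r, i ≤ j → lam j ≤ lam i) (hle : ∀ i, lam i ≤ l)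
    (z : Fin r ⊕ Fin l → ℂ) (hzinj : Function.Injective z)
    (hz1 : ∀ p, z p ^ (r + l) = 1) :
    (Matrix.of fun p c => z p ^ expo r l lam c) *
      (Matrix.of fun c p => ((r + l : ℕ) : ℂ)⁻¹ * (z p)⁻¹ ^ expo r l lam c) = 1 := by
  have hN : ((r + l : ℕ) : ℂ) ≠ 0 := Nat.cast_ne_zero.mpr (by omega)
  have hbij : Function.Bijective
      (fun c => (⟨expo r l lam c, expo_lt hr lam hle c⟩ : Fin (r + l))) := by
    rw [Fintype.bijective_iff_injective_and_card]
    refine ⟨fun c c' h => expo_inj hr lam hmono hle ?_, by simp⟩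
    exact congrArg Fin.val h
  have hz0 : ∀ p, z p ≠ 0 := by
    intro p hp
    have := hz1 p
    rw [hp, zero_pow (by omega : r + l ≠ 0)] at this
    exact zero_ne_one this
  ext p p'
  rw [Matrix.mul_apply]
  simp only [Matrix.of_apply]
  have hstep : ∀ c, z p ^ expo r l lam c * (((r + l : ℕ) : ℂ)⁻¹ * (z p')⁻¹ ^ expo r l lam c)
      = ((r + l : ℕ) : ℂ)⁻¹ * (z p * (z p')⁻¹) ^ expo r l lam c := by
    intro c; rw [mul_pow]; ring
  rw [Finset.sum_congr rfl (fun c _ => hstep c), ← Finset.mul_sum]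
  have hsum : ∑ c, (z p * (z p')⁻¹) ^ expo r l lam c
      = ∑ q : Fin (r + l), (z p * (z p')⁻¹) ^ q.val :=
    Fintype.sum_bijective _ hbij _ _ (fun c => rfl)
  rw [hsum, Fin.sum_univ_eq_sum_range (fun q => (z p * (z p')⁻¹) ^ q) (r + l)]
  by_cases hpp : p = p'
  · subst hpp
    rw [mul_inv_cancel₀ (hz0 p)]
    simp only [one_pow, Finset.sum_const, Finset.card_range, nsmul_eq_mul, mul_one]
    rw [inv_mul_cancel₀ hN, Matrix.one_apply_eq]
  · have hw1 : z p * (z p')⁻¹ ≠ 1 := by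
      intro h
      apply hpp
      apply hzinj
      exact (mul_inv_eq_one₀ (hz0 p')).mp h
    rw [geom_sum_eq hw1]
    have hwN : (z p * (z p')⁻¹) ^ (r + l) = 1 := by
      rw [mul_pow, hz1, inv_pow, hz1]; simp
    rw [hwN]
    simp [Matrix.one_apply_ne hpp]

lemma det_M_sign (hr : 0 < r) (hl : 0 < l) (z : Fin r ⊕ Fin l → ℂ) :
    ∀ (n : ℕ) (lam : Fin r → ℕ), (∀ i j : Fin r, i ≤ j → lam j ≤ lam i) → (∀ i, lam i ≤ l) →
      (∑ i, lam i) = n →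
      Matrix.det (Matrix.of fun p c => z p ^ expo r l lam c) =
        (-1 : ℂ) ^ n * Matrix.det (Matrix.of fun p c => z p ^ expo r l (fun _ => 0) c) := by
  intro n
  induction n with
  | zero =>
    intro lam hmono hle hsum
    have h0 : lam = fun _ => 0 :=
      funext fun i => Finset.sum_eq_zero_iff.mp hsum i (Finset.mem_univ i)
    rw [h0]; simp
  | succ n ih =>
    intro lam hmono hle hsum
    have hne : (Finset.univ.filter (fun i : Fin r => 0 < lam i)).Nonempty := by
      by_contra hcon
      rw [Finset.not_nonempty_iff_eq_empty, Finset.filter_eq_empty_iff] at hcon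
      have : ∑ i, lam i = 0 := Finset.sum_eq_zero (fun i hi => by
        have := hcon hi; omega)
      omega
    set i := (Finset.univ.filter (fun i : Fin r => 0 < lam i)).max' hne with hidef
    have hipos : 0 < lam i := by
      have := Finset.max'_mem _ hne
      rw [← hidef] at this
      simpa using this
    have hzero : ∀ i' : Fin r, i < i' → lam i' = 0 := by
      intro i' hii'
      by_contra hne0
      have hmem : i' ∈ Finset.univ.filter (fun i : Fin r => 0 < lam i) := by
        simp; omega
      have := Finset.le_max' _ _ hmem
      rw [← hidef] at this
      exact absurd hii' (not_lt.mpr this)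
    have hil := hle i
    have hkval : lam i - 1 < l := by omega
    obtain ⟨k, hkv⟩ : ∃ k : Fin l, k.val = lam i - 1 := ⟨⟨lam i - 1, hkval⟩, rfl⟩
    set lam' : Fin r → ℕ := Function.update lam i (lam i - 1) with hlam'
    have hlam'app : ∀ j, lam' j = if j = i then lam i - 1 else lam j := fun j => by
      rw [hlam', Function.update_apply]
    have hmono' : ∀ i1 i2 : Fin r, i1 ≤ i2 → lam' i2 ≤ lam' i1 := by
      intro i1 i2 h12
      rw [hlam'app, hlam'app]
      by_cases h1 : i1 = i <;> by_cases h2 : i2 = i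
      · simp [h1, h2]
      · subst h1
        have : i < i2 := lt_of_le_of_ne h12 (Ne.symm h2)
        simp [h2, hzero i2 this]
      · subst h2
        have := hmono i1 i h12
        simp [h1]; omega
      · simp [h1, h2]; exact hmono i1 i2 h12
    have hle' : ∀ j, lam' j ≤ l := by
      intro j; rw [hlam'app]
      by_cases hj : j = i <;> simp [hj]
      · omega
      · exact hle j
    have hsum' : ∑ j, lam' j = n := by
      have h1 : ∑ j, lam' j = (lam i - 1) + ∑ j ∈ Finset.univ \ {i}, lam j := by
        rw [hlam']
        exact Finset.sum_update_of_mem (Finset.mem_univ i) lam (lam i - 1)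
      have h2 : ∑ j, lam j = lam i + ∑ j ∈ Finset.univ \ {i}, lam j := by
        conv_lhs => rw [← Function.update_eq_self i lam]
        exact Finset.sum_update_of_mem (Finset.mem_univ i) lam (lam i)
      omega
    have hydk : ydT r l lam k = i.val + 1 := by
      have hfe : Finset.univ.filter (fun i' : Fin r => k.val + 1 ≤ lam i') = Finset.Iic i := by
        ext i'
        simp only [Finset.mem_filter, Finset.mem_univ, true_and, Finset.mem_Iic]
        constructor
        · intro h
          by_contra hgt
          rw [not_le] at hgt
          rw [hzero i' hgt] at h
          omega
        · intro h
          have := hmono i' i h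
          omega
      rw [ydT, hfe, Fin.card_Iic]
    have hydk' : ydT r l lam' k = i.val := by
      have hfe : Finset.univ.filter (fun i' : Fin r => k.val + 1 ≤ lam' i') = Finset.Iio i := by
        ext i'
        simp only [Finset.mem_filter, Finset.mem_univ, true_and, Finset.mem_Iio]
        rw [hlam'app]
        by_cases hi' : i' = i
        · rw [if_pos hi', hi']
          simp only [lt_self_iff_false, iff_false, not_le]
          omega
        · simp only [hi', if_false]
          constructor
          · intro h
            rcases lt_or_ge i' i with hc | hc
            · exact hc
            · have : i < i' := lt_of_le_of_ne hc (Ne.symm hi')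
              rw [hzero i' this] at h
              omega
          · intro h
            have := hmono i' i h.le
            omega
      rw [ydT, hfe, Fin.card_Iio]
    have hydne : ∀ k' : Fin l, k' ≠ k → ydT r l lam' k' = ydT r l lam k' := by
      intro k' hk'
      have hkv' : k'.val ≠ lam i - 1 := fun h => hk' (Fin.ext (by rw [h, hkv]))
      unfold ydT
      congr 1
      apply Finset.filter_congr
      intro a _
      rw [hlam'app]
      by_cases hai : a = i
      · rw [if_pos hai, hai]
        constructor <;> intro hh <;> omega
      · simp [hai]
    have hswap : (Matrix.of fun p c => z p ^ expo r l lam c) =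
        (Matrix.of fun p c => z p ^ expo r l lam' c).submatrix id
          ⇑(Equiv.swap (Sum.inl i) (Sum.inr k : Fin r ⊕ Fin l)) := by
      ext p c
      simp only [Matrix.of_apply, Matrix.submatrix_apply, id_eq]
      congr 1
      cases c with
      | inl j =>
        by_cases hj : j = i
        · rw [hj, Equiv.swap_apply_left]
          show aexp r lam i = bexp r l lam' k
          have hjlt := i.isLt
          simp only [aexp, bexp, cexp, hydk', hkv]
          omega
        · rw [Equiv.swap_apply_of_ne_of_ne (by simp [hj]) (by simp)]
          show aexp r lam j = aexp r lam' j
          simp only [aexp]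
          rw [hlam'app]
          simp [hj]
      | inr k' =>
        by_cases hk : k' = k
        · rw [hk, Equiv.swap_apply_right]
          show bexp r l lam k = aexp r lam' i
          have hilt := i.isLt
          simp only [aexp, bexp, cexp, hydk, hkv]
          rw [hlam'app i, if_pos rfl]
          omega
        · rw [Equiv.swap_apply_of_ne_of_ne (by simp) (by simp [hk])]
          show bexp r l lam k' = bexp r l lam' k'
          simp only [bexp, cexp, hydne k' hk]
    rw [hswap, Matrix.det_permute', Equiv.Perm.sign_swap (by simp),
      ih lam' hmono' hle' hsum']
    simp only [Units.val_neg, Units.val_one, Int.cast_neg, Int.cast_one]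
    ring


lemma key_det (hr : 0 < r) (hl : 0 < l) (lam : Fin r → ℕ)
    (hmono : ∀ i j : Fin r, i ≤ j → lam j ≤ lam i) (hle : ∀ i, lam i ≤ l)
    (u : Fin r → ℂ) (v : Fin l → ℂ)
    (hzinj : Function.Injective (Sum.elim u v))
    (hz1 : ∀ p, Sum.elim u v p ^ (r + l) = 1) :
    Matrix.det (Matrix.of fun i j : Fin r => u i ^ (lam j + (r - 1 - j.val))) =
      Matrix.det (Matrix.of fun p c => Sum.elim u v p ^ expo r l lam c) *
        ((((r + l : ℕ) : ℂ)⁻¹) ^ l * ((∏ i, v i) *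
          Matrix.det (Matrix.of fun (i k : Fin l) =>
            v i ^ (ydT r l lam k + (l - 1 - k.val))))) := by
  have horth := orth hr lam hmono hle (Sum.elim u v) hzinj hz1
  have hblock := det_block _ _ horth
  have h11 : (Matrix.of fun p c => Sum.elim u v p ^ expo r l lam c).toBlocks₁₁ =
      (Matrix.of fun i j : Fin r => u i ^ (lam j + (r - 1 - j.val))) := rfl
  rw [h11] at hblock
  rw [hblock]
  congr 1
  -- compute det of the 2,2 block of the inverse
  have h22 : (Matrix.of fun c p => ((r + l : ℕ) : ℂ)⁻¹ *
        (Sum.elim u v p)⁻¹ ^ expo r l lam c).toBlocks₂₂ =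
      (((r + l : ℕ) : ℂ)⁻¹) • Matrix.of (fun (k i : Fin l) =>
        v i * (Matrix.of fun (k i : Fin l) => v i ^ cexp r l lam k) k i) := by
    ext k i
    simp only [Matrix.toBlocks₂₂, Matrix.of_apply, Matrix.smul_apply, smul_eq_mul,
      Sum.elim_inr]
    congr 1
    have hv1 : v i ^ (r + l) = 1 := hz1 (Sum.inr i)
    have hcle : cexp r l lam k ≤ r + l - 1 := by
      have h1 := ydT_le lam k
      have h2 := k.isLt
      simp only [cexp]; omega
    have hmul : v i ^ (cexp r l lam k + 1) * v i ^ bexp r l lam k = 1 := by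
      rw [← pow_add, show cexp r l lam k + 1 + bexp r l lam k = r + l by
        simp only [bexp]; omega, hv1]
    calc (v i)⁻¹ ^ expo r l lam (Sum.inr k) = (v i ^ bexp r l lam k)⁻¹ := by
          rw [inv_pow]; rfl
      _ = v i ^ (cexp r l lam k + 1) := inv_eq_of_mul_eq_one_left hmul
      _ = v i * v i ^ cexp r l lam k := by rw [pow_succ']
  rw [h22, Matrix.det_smul, Matrix.det_mul_row v]
  have htr : (Matrix.of fun (k i : Fin l) => v i ^ cexp r l lam k).det =
      (Matrix.of fun (i k : Fin l) => v i ^ (ydT r l lam k + (l - 1 - k.val))).det := by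
    rw [← Matrix.det_transpose]
    rfl
  rw [htr]
  simp [Fintype.card_fin, smul_eq_mul]


end SchurRL

/-- Rank-level reciprocity for Schur polynomials at roots of unity: if `S` is an
`r`-element set of `(r+l)`-th roots of unity and `T` its complement, then for any
Young diagram `λ` in an `l × r` rectangle,
`S_λ(u : u ∈ S) = (-1)^{|λ|} · S_{λᵀ}(v : v ∈ T)`. -/
theorem schur_rank_level_reciprocity (r l : ℕ) (hr : 0 < r) (hl : 0 < l)
    (lam : Fin r → ℕ) (hmono : ∀ i j : Fin r, i ≤ j → lam j ≤ lam i)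
    (hle : ∀ i, lam i ≤ l)
    (u : Fin r → ℂ) (v : Fin l → ℂ)
    (hu : Function.Injective u) (hv : Function.Injective v)
    (hdisj : Disjoint (Set.range u) (Set.range v))
    (hcover : Set.range u ∪ Set.range v = {z : ℂ | z ^ (r + l) = 1}) :
    schurEval r lam u = (-1) ^ (∑ i, lam i) * schurEval l (ydT r l lam) v := by
  open SchurRL in
  have hz1 : ∀ p, Sum.elim u v p ^ (r + l) = 1 := by
    intro p
    have hmem : Sum.elim u v p ∈ Set.range u ∪ Set.range v := by
      cases p with
      | inl i => exact Or.inl ⟨i, rfl⟩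
      | inr i => exact Or.inr ⟨i, rfl⟩
    rw [hcover] at hmem
    exact hmem
  have hzinj : Function.Injective (Sum.elim u v) := by
    intro p q h
    cases p with
    | inl i => cases q with
      | inl i' =>
        simp only [Sum.elim_inl] at h
        exact congrArg Sum.inl (hu h)
      | inr i' =>
        simp only [Sum.elim_inl, Sum.elim_inr] at h
        exact absurd ⟨i', h.symm⟩ (Set.disjoint_left.mp hdisj ⟨i, rfl⟩)
    | inr i => cases q with
      | inl i' =>
        simp only [Sum.elim_inl, Sum.elim_inr] at h
        exact absurd ⟨i, h⟩ (Set.disjoint_left.mp hdisj ⟨i', rfl⟩)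
      | inr i' =>
        simp only [Sum.elim_inr] at h
        exact congrArg Sum.inr (hv h)
  have k1 := SchurRL.key_det hr hl lam hmono hle u v hzinj hz1
  have k0 := SchurRL.key_det hr hl (fun _ => 0) (fun _ _ _ => le_refl 0)
    (fun _ => Nat.zero_le l) u v hzinj hz1
  have hsgn := SchurRL.det_M_sign hr hl (Sum.elim u v) (∑ i, lam i) lam hmono hle rfl
  -- simplify k0
  have hyd0 : ∀ k : Fin l, ydT r l (fun _ => 0 : Fin r → ℕ) k = 0 := by
    intro k; simp [ydT]
  have hP0eq : (Matrix.of fun i j : Fin r => u i ^ ((fun _ => 0 : Fin r → ℕ) j + (r - 1 - j.val)))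
      = (Matrix.of fun i j : Fin r => u i ^ (r - 1 - j.val)) := by
    ext i j; simp
  have hD0eq : (Matrix.of fun (i k : Fin l) =>
        v i ^ (ydT r l (fun _ => 0 : Fin r → ℕ) k + (l - 1 - k.val)))
      = (Matrix.of fun (i k : Fin l) => v i ^ (l - 1 - k.val)) := by
    ext i k
    simp only [Matrix.of_apply]
    rw [hyd0, zero_add]
  rw [hP0eq, hD0eq] at k0
  have hP0 : Matrix.det (Matrix.of fun i j : Fin r => u i ^ (r - 1 - j.val)) ≠ 0 :=
    SchurRL.det_powcol_ne_zero u hu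
  have hD0 : Matrix.det (Matrix.of fun (i k : Fin l) => v i ^ (l - 1 - k.val)) ≠ 0 :=
    SchurRL.det_powcol_ne_zero v hv
  -- nonzero pieces
  have hN : (((r + l : ℕ) : ℂ))⁻¹ ≠ 0 := inv_ne_zero (Nat.cast_ne_zero.mpr (by omega))
  have hNl : ((((r + l : ℕ) : ℂ))⁻¹) ^ l ≠ 0 := pow_ne_zero l hN
  have hprodv : (∏ i, v i) ≠ 0 := by
    rw [Finset.prod_ne_zero_iff]
    intro i _ h0
    have := hz1 (Sum.inr i)
    rw [Sum.elim_inr, h0, zero_pow (by omega : r + l ≠ 0)] at this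
    exact zero_ne_one this
  have hM0 : Matrix.det (Matrix.of fun p c =>
      Sum.elim u v p ^ SchurRL.expo r l (fun _ => 0) c) ≠ 0 := by
    intro h0
    rw [h0, zero_mul] at k0
    exact hP0 k0
  -- unfold and conclude
  unfold schurEval
  show Matrix.det (Matrix.of fun i j : Fin r => u i ^ (lam j + (r - 1 - j.val))) /
      Matrix.det (Matrix.of fun i j : Fin r => u i ^ (r - 1 - j.val)) =
    (-1) ^ (∑ i, lam i) *
      (Matrix.det (Matrix.of fun (i k : Fin l) => v i ^ (ydT r l lam k + (l - 1 - k.val))) /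
        Matrix.det (Matrix.of fun (i k : Fin l) => v i ^ (l - 1 - k.val)))
  rw [k1, k0, hsgn]
  set X := Matrix.det (Matrix.of fun p c =>
    Sum.elim u v p ^ SchurRL.expo r l (fun _ => 0) c) with hX
  set D1 := Matrix.det (Matrix.of fun (i k : Fin l) =>
    v i ^ (ydT r l lam k + (l - 1 - k.val))) with hD1
  set D0' := Matrix.det (Matrix.of fun (i k : Fin l) => v i ^ (l - 1 - k.val)) with hD0'
  set Pv := (∏ i : Fin l, v i) with hPv
  set E := ((((r + l : ℕ) : ℂ))⁻¹) ^ l with hE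
  field_simp
end

section
/- Let ζ be a primitive (r+l)-th root of unity and S an r-element subset of Z/(r+l)Z with complement T. Then |Vdm(ζ^s : s ∈ S)|^2 = (r+l)^r / ∏_{s ∈ S, t ∈ T} |ζ^s - ζ^t|, where Vdm denotes the Vandermonde determinant ∏_{s < s'} (ζ^s - ζ^{s'}). -/
open Complex Polynomial Finset

lemma aux_prod_one_sub (n : ℕ) (hn : 0 < n) {ζ : ℂ} (hζ : IsPrimitiveRoot ζ n) :
    ∏ j ∈ (Finset.range n).erase 0, (1 - ζ ^ j) = (n : ℂ) := by
  have himg : Polynomial.nthRootsFinset n (1 : ℂ) = (Finset.range n).image (fun j => ζ ^ j) := by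
    rw [Polynomial.nthRootsFinset_def, hζ.nthRoots_eq (one_pow n)]
    ext x
    simp [Multiset.mem_toFinset]
  have hprod : (X : ℂ[X]) ^ n - 1 = ∏ j ∈ Finset.range n, (X - C (ζ ^ j)) := by
    rw [Polynomial.X_pow_sub_one_eq_prod hn hζ, himg,
      Finset.prod_image (fun i hi j hj h => hζ.injOn_pow (by simpa using hi) (by simpa using hj) h)]
  have h0 : (0 : ℕ) ∈ Finset.range n := Finset.mem_range.2 hn
  rw [← Finset.prod_erase_mul _ _ h0, pow_zero, map_one] at hprod
  have hg := geom_sum_mul (X : ℂ[X]) n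
  have hX1 : (X - 1 : ℂ[X]) ≠ 0 := by
    intro h
    have := congrArg (Polynomial.eval 0) h
    simp at this
  have hcancel : (∑ i ∈ Finset.range n, (X : ℂ[X]) ^ i)
      = ∏ j ∈ (Finset.range n).erase 0, (X - C (ζ ^ j)) :=
    mul_right_cancel₀ hX1 (by rw [hg, hprod])
  have := congrArg (Polynomial.eval 1) hcancel
  simp only [eval_finset_sum, eval_pow, eval_X, one_pow, eval_prod, eval_sub, eval_C,
    Finset.sum_const, Finset.card_range, nsmul_eq_mul, mul_one] at this
  rw [← this]

lemma aux_abs_zeta (n : ℕ) (hn : 0 < n) {ζ : ℂ} (hζ : IsPrimitiveRoot ζ n) :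
    ‖ζ‖ = 1 := by
  have h := congrArg norm hζ.pow_eq_one
  rw [norm_pow, norm_one] at h
  have h0 : 0 ≤ ‖ζ‖ := norm_nonneg ζ
  by_contra hne
  rcases lt_or_gt_of_ne hne with hlt | hgt
  · have := pow_lt_one₀ h0 hlt hn.ne'
    linarith
  · have := one_lt_pow₀ hgt hn.ne'
    linarith

lemma aux_pow_mod (n : ℕ) {ζ : ℂ} (hζ : IsPrimitiveRoot ζ n) (x : ℕ) :
    ζ ^ (x % n) = ζ ^ x := by
  conv_rhs => rw [← Nat.mod_add_div x n, pow_add, pow_mul, hζ.pow_eq_one, one_pow, mul_one]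

lemma aux_prod_erase (n : ℕ) [NeZero n] {ζ : ℂ} (hζ : IsPrimitiveRoot ζ n) (i : Fin n) :
    ∏ j ∈ Finset.univ.erase i, ‖ζ ^ (i : ℕ) - ζ ^ (j : ℕ)‖ = (n : ℝ) := by
  have hn : 0 < n := Nat.pos_of_ne_zero (NeZero.ne n)
  have hpow : ∀ a b : Fin n, ζ ^ ((a + b : Fin n) : ℕ) = ζ ^ (a : ℕ) * ζ ^ (b : ℕ) := by
    intro a b
    rw [Fin.val_add, aux_pow_mod n hζ, pow_add]
  have step1 : ∏ j ∈ Finset.univ.erase i, ‖ζ ^ (i : ℕ) - ζ ^ (j : ℕ)‖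
      = ∏ k ∈ Finset.univ.erase (0 : Fin n), ‖1 - ζ ^ (k : ℕ)‖ := by
    refine Finset.prod_nbij' (fun j => j - i) (fun k => i + k) ?_ ?_ ?_ ?_ ?_
    · intro j hj
      simp only [Finset.mem_erase, Finset.mem_univ, and_true] at hj ⊢
      intro h; apply hj; rwa [sub_eq_zero] at h
    · intro k hk
      simp only [Finset.mem_erase, Finset.mem_univ, and_true] at hk ⊢
      intro h; apply hk; exact add_left_cancel (h.trans (add_zero i).symm)
    · intro j hj; simp
    · intro k hk; simp
    · intro j hj
      have : ζ ^ (j : ℕ) = ζ ^ (i : ℕ) * ζ ^ ((j - i : Fin n) : ℕ) := by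
        rw [← hpow, add_sub_cancel]
      rw [this, ← mul_one_sub, norm_mul, norm_pow, aux_abs_zeta n hn hζ, one_pow, one_mul]
  rw [step1]
  have step2 : ∏ k ∈ Finset.univ.erase (0 : Fin n), ‖1 - ζ ^ (k : ℕ)‖
      = ∏ j ∈ (Finset.range n).erase 0, ‖1 - ζ ^ j‖ := by
    refine Finset.prod_nbij (fun k => (k : ℕ)) ?_ ?_ ?_ ?_
    · intro k hk
      simp only [Finset.mem_erase, Finset.mem_univ, and_true] at hk
      simp only [Finset.mem_erase, Finset.mem_range]
      exact ⟨fun h => hk (Fin.ext h), k.isLt⟩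
    · intro a _ b _ h; exact Fin.ext h
    · intro j hj
      simp only [Finset.coe_erase, Finset.coe_range, Set.mem_diff, Set.mem_Iio,
        Set.mem_singleton_iff] at hj
      exact ⟨⟨j, hj.1⟩, Finset.mem_coe.2 (Finset.mem_erase.2
        ⟨by simpa [Fin.ext_iff] using hj.2, Finset.mem_univ _⟩), rfl⟩
    · intro k _; rfl
  rw [step2, ← norm_prod, aux_prod_one_sub n hn hζ]
  simp

/-- For `ζ` a primitive `(r+l)`-th root of unity and `S ⊆ ℤ/(r+l)ℤ` of size `r`
with complement `T`: `|Vdm(ζ^s : s ∈ S)|² = (r+l)^r / ∏_{s ∈ S, t ∈ T} |ζ^s - ζ^t|`,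
where `|Vdm(x_1,...,x_r)|² = ∏_{i ≠ j} |x_i - x_j|`. -/
theorem vandermonde_abs_sq_roots_of_unity (r l : ℕ) (hr : 0 < r) (hl : 0 < l)
    (S : Finset (Fin (r + l))) (hS : S.card = r) :
    let ζ : ℂ := Complex.exp (2 * Real.pi * Complex.I / (r + l))
    (∏ s ∈ S, ∏ s' ∈ S.erase s, ‖ζ ^ s.val - ζ ^ s'.val‖) =
      ((r + l : ℝ)) ^ r /
        ∏ s ∈ S, ∏ t ∈ Sᶜ, ‖ζ ^ s.val - ζ ^ t.val‖ := by
  intro ζ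
  have hn : 0 < r + l := by omega
  haveI : NeZero (r + l) := ⟨hn.ne'⟩
  have hζ : IsPrimitiveRoot ζ (r + l) := by
    have h := Complex.isPrimitiveRoot_exp (r + l) hn.ne'
    have hc : ((r + l : ℕ) : ℂ) = (r : ℂ) + (l : ℂ) := by push_cast; ring
    rwa [hc] at h
  have hne : ∀ s ∈ S, ∀ t ∈ Sᶜ, ‖ζ ^ s.val - ζ ^ t.val‖ ≠ 0 := by
    intro s hs t ht
    rw [Finset.mem_compl] at ht
    have hst : s ≠ t := fun h => ht (h ▸ hs)
    rw [ne_eq, norm_eq_zero, sub_eq_zero]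
    intro h
    exact hst (Fin.ext (hζ.pow_inj s.isLt t.isLt h))
  have hB : (∏ s ∈ S, ∏ t ∈ Sᶜ, ‖ζ ^ s.val - ζ ^ t.val‖) ≠ 0 :=
    Finset.prod_ne_zero_iff.2 fun s hs => Finset.prod_ne_zero_iff.2 fun t ht => hne s hs t ht
  rw [eq_div_iff hB]
  have hsplit : ∀ s ∈ S,
      (∏ s' ∈ S.erase s, ‖ζ ^ s.val - ζ ^ s'.val‖) *
      (∏ t ∈ Sᶜ, ‖ζ ^ s.val - ζ ^ t.val‖) = ((r + l : ℕ) : ℝ) := by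
    intro s hs
    rw [← Finset.prod_union (Finset.disjoint_left.2 fun x hx hx' =>
      (Finset.mem_compl.1 hx') (Finset.mem_of_mem_erase hx))]
    have hset : S.erase s ∪ Sᶜ = Finset.univ.erase s := by
      ext x
      simp only [Finset.mem_union, Finset.mem_erase, Finset.mem_compl, Finset.mem_univ, and_true]
      constructor
      · rintro (⟨hxs, _⟩ | hx)
        · exact hxs
        · rintro rfl; exact hx hs
      · intro hxs
        by_cases hxS : x ∈ S
        · exact Or.inl ⟨hxs, hxS⟩
        · exact Or.inr hxS
    rw [hset, aux_prod_erase (r + l) hζ s]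
  rw [← Finset.prod_mul_distrib, Finset.prod_congr rfl hsplit, Finset.prod_const, hS]
  push_cast
  ring
end

section
/- Let ζ be a primitive N-th root of unity, N = r+1, and S = Z/NZ \ {s} for some s. Then the k-th elementary symmetric polynomial evaluated at (ζ^σ : σ ∈ S) equals (-1)^k ζ^{sk}, for 0 ≤ k ≤ r. -/
open Polynomial Finset

private lemma full_esymm_zero {n : ℕ} {ζ : ℂ} (prim : IsPrimitiveRoot ζ n)
    {k : ℕ} (hk1 : 1 ≤ k) (hk2 : k < n) :
    (∑ A ∈ Finset.powersetCard k (Finset.univ : Finset (Fin n)),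
        ∏ σ ∈ A, ζ ^ σ.val) = 0 := by
  have hn0 : 0 < n := lt_of_le_of_lt (Nat.zero_le k) hk2
  haveI : NeZero n := ⟨hn0.ne'⟩
  -- the product of (X - ζ^σ) over all σ is X^n - 1
  have hprod : (∏ σ : Fin n, (X - C (ζ ^ σ.val)) : ℂ[X]) = X ^ n - 1 := by
    rw [X_pow_sub_one_eq_prod hn0 prim]
    refine Finset.prod_bij (fun σ _ => ζ ^ σ.val) ?_ ?_ ?_ ?_
    · intro σ _
      refine (Polynomial.mem_nthRootsFinset hn0 1).2 ?_
      rw [← pow_mul, mul_comm, pow_mul, prim.pow_eq_one, one_pow]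
    · intro a _ b _ hab
      exact Fin.ext (prim.pow_inj a.2 b.2 hab)
    · intro μ hμ
      obtain ⟨i, hi, hζi⟩ :=
        prim.eq_pow_of_pow_eq_one ((Polynomial.mem_nthRootsFinset hn0 1).1 hμ)
      exact ⟨⟨i, hi⟩, Finset.mem_univ _, hζi⟩
    · intro σ _; rfl
  set f : Fin n → ℂ := fun σ => ζ ^ σ.val with hf
  have hcard : Multiset.card ((Finset.univ : Finset (Fin n)).val.map f) = n := by
    simp
  have hle : n - k ≤ Multiset.card ((Finset.univ : Finset (Fin n)).val.map f) := by
    rw [hcard]; exact Nat.sub_le _ _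
  have hco := Multiset.prod_X_sub_C_coeff _ hle
  rw [hcard] at hco
  have hnk : n - (n - k) = k := Nat.sub_sub_self hk2.le
  rw [hnk] at hco
  have hmm : ((Finset.univ : Finset (Fin n)).val.map f).map (fun t => X - C t) =
      (Finset.univ : Finset (Fin n)).val.map (fun σ => X - C (f σ)) := by
    rw [Multiset.map_map]; rfl
  rw [hmm] at hco
  have hps : ((Finset.univ : Finset (Fin n)).val.map (fun σ => X - C (f σ))).prod =
      ∏ σ : Fin n, (X - C (f σ)) := (Finset.prod_eq_multiset_prod _ _).symm
  rw [hps, hprod] at hco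
  have hz : ((X : ℂ[X]) ^ n - 1).coeff (n - k) = 0 := by
    have h1 : n - k ≠ n := by
      have := Nat.sub_lt hn0 hk1
      omega
    have h2 : n - k ≠ 0 := by omega
    simp [coeff_X_pow, Polynomial.coeff_one, h1, h2]
  rw [hz] at hco
  have hesymm : ((Finset.univ : Finset (Fin n)).val.map f).esymm k = 0 := by
    have hne : ((-1 : ℂ)) ^ k ≠ 0 := pow_ne_zero _ (by norm_num)
    rcases mul_eq_zero.1 hco.symm with h | h
    · exact absurd h hne
    · exact h
  rw [Finset.esymm_map_val] at hesymm
  exact hesymm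

/-- Let `ζ = exp(2πi/(r+1))` and `S = ℤ/(r+1)ℤ \ {s}`. Then the `k`-th
elementary symmetric polynomial evaluated at `(ζ^σ : σ ∈ S)` equals
`(-1)^k ζ^{sk}`, for `0 ≤ k ≤ r`. -/
theorem esymm_roots_of_unity_erase (r : ℕ) (hr : 0 < r) (s : Fin (r + 1))
    (k : ℕ) (hk : k ≤ r) :
    let ζ : ℂ := Complex.exp (2 * Real.pi * Complex.I / (r + 1))
    (∑ A ∈ Finset.powersetCard k (Finset.univ.erase s),
        ∏ σ ∈ A, ζ ^ σ.val) = (-1 : ℂ) ^ k * ζ ^ (s.val * k) := by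
  intro ζ
  have prim : IsPrimitiveRoot ζ (r + 1) := by
    have h := Complex.isPrimitiveRoot_exp (r + 1) (Nat.succ_ne_zero r)
    convert h using 3
    push_cast; ring
  induction k with
  | zero => simp
  | succ k ih =>
    have hks : k ≤ r := Nat.le_of_succ_le hk
    have ihk := ih hks
    have hzero := full_esymm_zero prim (Nat.succ_le_succ (Nat.zero_le k))
      (Nat.lt_succ_of_le hk)
    have hins : (Finset.univ : Finset (Fin (r + 1))) = insert s (Finset.univ.erase s) :=
      (Finset.insert_erase (Finset.mem_univ s)).symm
    rw [hins, Finset.powersetCard_succ_insert (Finset.notMem_erase s _)] at hzero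
    have hdisj : Disjoint (Finset.powersetCard (k + 1) (Finset.univ.erase s))
        ((Finset.powersetCard k (Finset.univ.erase s)).image (insert s)) := by
      rw [Finset.disjoint_left]
      intro A hA hA'
      obtain ⟨B, _, rfl⟩ := Finset.mem_image.1 hA'
      have hsub := (Finset.mem_powersetCard.1 hA).1
      exact (Finset.notMem_erase s _) (hsub (Finset.mem_insert_self s B))
    rw [Finset.sum_union hdisj] at hzero
    have hinj : ∀ A ∈ Finset.powersetCard k (Finset.univ.erase s),
        ∀ B ∈ Finset.powersetCard k (Finset.univ.erase s),
        insert s A = insert s B → A = B := by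
      intro A hA B hB hAB
      have hsA : s ∉ A := fun h => (Finset.notMem_erase s _)
        ((Finset.mem_powersetCard.1 hA).1 h)
      have hsB : s ∉ B := fun h => (Finset.notMem_erase s _)
        ((Finset.mem_powersetCard.1 hB).1 h)
      rw [← Finset.erase_insert hsA, ← Finset.erase_insert hsB, hAB]
    rw [Finset.sum_image hinj] at hzero
    have hrw : ∑ A ∈ Finset.powersetCard k (Finset.univ.erase s),
        ∏ σ ∈ insert s A, ζ ^ σ.val =
        ζ ^ s.val * ∑ A ∈ Finset.powersetCard k (Finset.univ.erase s),
          ∏ σ ∈ A, ζ ^ σ.val := by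
      rw [Finset.mul_sum]
      refine Finset.sum_congr rfl fun A hA => ?_
      have hsA : s ∉ A := fun h => (Finset.notMem_erase s _)
        ((Finset.mem_powersetCard.1 hA).1 h)
      rw [Finset.prod_insert hsA]
    rw [hrw, ihk] at hzero
    have : (∑ A ∈ Finset.powersetCard (k + 1) (Finset.univ.erase s),
        ∏ σ ∈ A, ζ ^ σ.val) = -(ζ ^ s.val * ((-1 : ℂ) ^ k * ζ ^ (s.val * k))) := by
      exact eq_neg_of_add_eq_zero_left hzero
    rw [this, Nat.mul_succ, pow_add, pow_succ]
    ring
end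

section
/- If S and T are complementary subsets of Z/(r+l)Z with |S| = r, |T| = l, and m is a positive integer divisible by rl, then (∏_{s∈S} ζ^s)^{−m/r} = (−1)^m (∏_{t∈T} ζ^t)^{−m/l}, where ζ is a primitive (r+l)-th root of unity. -/
/-- If `S` and `T = Sᶜ` are complementary subsets of `ℤ/(r+l)ℤ` with `|S| = r`,
and `rl ∣ m`, then `(∏_{s∈S} ζ^s)^{−m/r} = (−1)^m (∏_{t∈T} ζ^t)^{−m/l}` where
`ζ = exp(2πi/(r+l))`. -/
theorem prod_zeta_pow_symmetry (r l m : ℕ) (hr : 0 < r) (hl : 0 < l)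
    (hm : 0 < m) (hdvd : r * l ∣ m)
    (S : Finset (Fin (r + l))) (hS : S.card = r) :
    let ζ : ℂ := Complex.exp (2 * Real.pi * Complex.I / (r + l))
    (∏ s ∈ S, ζ ^ s.val) ^ (-(m / r : ℤ)) =
      (-1 : ℂ) ^ m * (∏ t ∈ Sᶜ, ζ ^ t.val) ^ (-(m / l : ℤ)) := by
  intro ζ
  obtain ⟨c, hc⟩ := hdvd
  have hrm : r ∣ m := ⟨l * c, by rw [hc]; ring⟩
  have hlm : l ∣ m := ⟨r * c, by rw [hc]; ring⟩
  have ha : (m / r : ℤ) = (l * c : ℕ) := by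
    push_cast
    rw [Int.ediv_eq_iff_eq_mul_left (by exact_mod_cast hr.ne') (by exact_mod_cast hrm)]
    push_cast [hc]; ring
  have hb : (m / l : ℤ) = (r * c : ℕ) := by
    push_cast
    rw [Int.ediv_eq_iff_eq_mul_left (by exact_mod_cast hl.ne') (by exact_mod_cast hlm)]
    push_cast [hc]; ring
  set A := ∑ s ∈ S, s.val with hA
  set B := ∑ t ∈ Sᶜ, t.val with hB
  have hAB : 2 * (A + B) = (r + l) * (r + l - 1) := by
    have h1 : A + B = ∑ x : Fin (r + l), x.val := Finset.sum_add_sum_compl S _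
    have h2 : ∑ x : Fin (r + l), x.val = ∑ i ∈ Finset.range (r + l), i :=
      Fin.sum_univ_eq_sum_range (fun i => i) (r + l)
    rw [h1, h2, ← Finset.sum_range_id_mul_two (r + l)]
    ring
  have heven : 2 ∣ r * (r - 1) := by
    rcases Nat.even_or_odd r with he | ho
    · exact Dvd.dvd.mul_right he.two_dvd _
    · exact Dvd.dvd.mul_left (Nat.Odd.sub_odd ho odd_one).two_dvd _
  set t := r * (r - 1) / 2 with ht
  have h2t : 2 * t = r * (r - 1) := Nat.mul_div_cancel' heven
  have hP : ∏ s ∈ S, ζ ^ s.val = ζ ^ A := Finset.prod_pow_eq_pow_sum S _ ζ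
  have hQ : ∏ t ∈ Sᶜ, ζ ^ t.val = ζ ^ B := Finset.prod_pow_eq_pow_sum Sᶜ _ ζ
  rw [hP, hQ, ha, hb]
  have hnC : ((r : ℂ) + l) ≠ 0 := by
    have : ((r + l : ℕ) : ℂ) ≠ 0 := Nat.cast_ne_zero.mpr (by omega)
    push_cast at this; exact this
  have hpow : ∀ (N : ℕ) (k : ℤ), (ζ ^ N) ^ k
      = Complex.exp ((k * N) * (2 * Real.pi * Complex.I / ((r : ℂ) + l))) := by
    intro N k
    show ((Complex.exp _) ^ N) ^ k = _
    rw [← Complex.exp_nat_mul, ← Complex.exp_int_mul]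
    ring_nf
  have hneg1 : (-1 : ℂ) ^ m = Complex.exp (m * (Real.pi * Complex.I)) := by
    rw [← Complex.exp_pi_mul_I, ← Complex.exp_nat_mul]
  rw [hpow, hpow, hneg1, ← Complex.exp_add]
  rw [Complex.exp_eq_exp_iff_exists_int]
  refine ⟨(c * t : ℤ) - (c * A : ℤ), ?_⟩
  have key : -(2 * ((l * c : ℕ) : ℤ) * A) =
      ((r : ℤ) + l) * m - 2 * ((r * c : ℕ) : ℤ) * B
        + 2 * ((r : ℤ) + l) * ((c * t : ℤ) - (c * A : ℤ)) := by
    have hAB' : (2 : ℤ) * (A + B) = ((r : ℤ) + l) * ((r : ℤ) + l - 1) := by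
      have := congrArg (Nat.cast : ℕ → ℤ) hAB
      push_cast [Nat.cast_sub (by omega : 1 ≤ r + l)] at this
      linarith
    have h2t' : (2 : ℤ) * t = (r : ℤ) * ((r : ℤ) - 1) := by
      have := congrArg (Nat.cast : ℕ → ℤ) h2t
      push_cast [Nat.cast_sub hr] at this
      linarith
    have hm' : (m : ℤ) = r * l * c := by exact_mod_cast hc
    push_cast
    rw [hm']
    linear_combination ((r : ℤ) * c) * hAB' - (((r : ℤ) + l) * c) * h2t'
  push_cast
  field_simp
  have keyC : -(2 * ((l : ℂ) * c) * A) =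
      ((r : ℂ) + l) * m - 2 * ((r : ℂ) * c) * B
        + 2 * ((r : ℂ) + l) * ((c : ℂ) * t - (c : ℂ) * A) := by exact_mod_cast key
  push_cast
  linear_combination keyC
end
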